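/- Let Q_GHZ be uniform on {x ∈ F_2^3 : x1+x2+x3=0} and define the GHZ game: on input (x1,x2,x3) ← Q_GHZ, players output bits (y1,y2,y3) and win iff y1 ⊕ y2 ⊕ y3 = x1 ∨ x2 ∨ x3, where each y_i depends only on x_i. Then the maximum winning probability over all deterministic strategies f_1, f_2, f_3 : F_2 → F_2 is exactly 3/4. -/
import Mathlib


open Finset

/-- The winning probability of a deterministic strategy `(f₁, f₂, f₃)` in the GHZ game:
queries are uniform on `{x ∈ F₂³ : x₁ + x₂ + x₃ = 0}` (the four strings
`000, 011, 101, 110`), and the players win iff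
`f₁(x₁) ⊕ f₂(x₂) ⊕ f₃(x₃) = x₁ ∨ x₂ ∨ x₃`. -/
noncomputable def ghzWinProb (f₁ f₂ f₃ : Bool → Bool) : ℝ :=
  (1 / 4) * ∑ x ∈ (Finset.univ.filter
      (fun x : Bool × Bool × Bool => xor x.1 (xor x.2.1 x.2.2) = false)),
    if xor (f₁ x.1) (xor (f₂ x.2.1) (f₃ x.2.2)) = (x.1 || x.2.1 || x.2.2)
    then (1 : ℝ) else 0

lemma ghz_filter : (Finset.univ.filter
      (fun x : Bool × Bool × Bool => xor x.1 (xor x.2.1 x.2.2) = false)) =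
    ({(false,false,false),(false,true,true),(true,false,true),(true,true,false)} :
      Finset (Bool × Bool × Bool)) := by decide

lemma ghz_eval (f₁ f₂ f₃ : Bool → Bool) :
    ghzWinProb f₁ f₂ f₃ = (1 / 4) *
      ((if xor (f₁ false) (xor (f₂ false) (f₃ false)) = false then (1:ℝ) else 0) +
       ((if xor (f₁ false) (xor (f₂ true) (f₃ true)) = true then (1:ℝ) else 0) +
        ((if xor (f₁ true) (xor (f₂ false) (f₃ true)) = true then (1:ℝ) else 0) +
         (if xor (f₁ true) (xor (f₂ true) (f₃ false)) = true then (1:ℝ) else 0)))) := by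
  rw [ghzWinProb, ghz_filter]
  rw [Finset.sum_insert (by decide), Finset.sum_insert (by decide),
    Finset.sum_insert (by decide), Finset.sum_singleton]
  norm_num

lemma ghz_le (f₁ f₂ f₃ : Bool → Bool) : ghzWinProb f₁ f₂ f₃ ≤ 3 / 4 := by
  rw [ghz_eval]
  rcases Bool.eq_false_or_eq_true (f₁ false) with h1 | h1 <;>
  rcases Bool.eq_false_or_eq_true (f₁ true) with h2 | h2 <;>
  rcases Bool.eq_false_or_eq_true (f₂ false) with h3 | h3 <;>
  rcases Bool.eq_false_or_eq_true (f₂ true) with h4 | h4 <;>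
  rcases Bool.eq_false_or_eq_true (f₃ false) with h5 | h5 <;>
  rcases Bool.eq_false_or_eq_true (f₃ true) with h6 | h6 <;>
  simp [h1, h2, h3, h4, h5, h6] <;> norm_num

/-- The value of the GHZ game over deterministic strategies is exactly `3/4`. -/
theorem stmt_18 :
    IsGreatest {p : ℝ | ∃ f₁ f₂ f₃ : Bool → Bool, p = ghzWinProb f₁ f₂ f₃}
      (3 / 4) := by
  constructor
  · exact ⟨not, not, not, by rw [ghz_eval]; norm_num⟩
  · rintro p ⟨f₁, f₂, f₃, rfl⟩
    exact ghz_le f₁ f₂ f₃
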